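/- A real point (a,b) lies in the projection onto the plane z=0 of the real intersection curve of the torus T = 0 and the quadric Q = 0 if and only if S0(a,b) = 0, Δ_T(a,b) ≤ 0 and Δ_Q(a,b) ≥ 0, where S0 = Res_z(T,Q), Δ_T = p0 and Δ_Q = q1^2 - 4q0. -/

import Mathlib

/-- The resultant of `z^4 + p2 z^2 + p0` and `z^2 + q1 z + q0` with respect to `z`,
as the determinant of the Sylvester matrix. -/
def sylvRes (p2 p0 q1 q0 : ℝ) : ℝ :=
  (!![(1 : ℝ), 0, p2, 0, p0, 0;
      0, 1, 0, p2, 0, p0;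
      1, q1, q0, 0, 0, 0;
      0, 1, q1, q0, 0, 0;
      0, 0, 1, q1, q0, 0;
      0, 0, 0, 1, q1, q0]).det

set_option maxRecDepth 10000 in
set_option maxHeartbeats 1000000 in
lemma sylvRes_eq (p2 p0 q1 q0 : ℝ) :
    sylvRes p2 p0 q1 q0 =
      (p0 - q0*(p2 - q0 + q1^2))^2
        - (p0 - q0*(p2 - q0 + q1^2)) * (-q1*(p2 - 2*q0 + q1^2)) * q1
        + (-q1*(p2 - 2*q0 + q1^2))^2 * q0 := by
  rw [sylvRes]
  simp [Matrix.det_succ_row_zero, Fin.sum_univ_succ, Fin.succAbove]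
  norm_num [Matrix.cons_val_zero, Matrix.cons_val_one, Matrix.head_cons,
    Matrix.cons_val_succ, Fin.castSucc, Fin.castAdd, Fin.castLE, Fin.succ]
  ring

/-- A point `(a0,b0)` lies in the projection onto `z = 0` of the real intersection
curve of the torus and the quadric iff `S0(a0,b0) = 0`, `Δ_T(a0,b0) ≤ 0` and
`Δ_Q(a0,b0) ≥ 0`. -/
theorem stmt9 (R r a b d e f g h i j a0 b0 : ℝ) (hr : 0 < r) (hrR : r < R)
    (p2 p0 q1 q0 : ℝ)
    (hp2 : p2 = 2 * (R ^ 2 - r ^ 2 + a0 ^ 2 + b0 ^ 2))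
    (hp0 : p0 = (R ^ 2 + 2 * R * r + r ^ 2 - a0 ^ 2 - b0 ^ 2)
      * (R ^ 2 - 2 * R * r + r ^ 2 - a0 ^ 2 - b0 ^ 2))
    (hq1 : q1 = e * a0 + f * b0 + i)
    (hq0 : q0 = a * a0 ^ 2 + b * b0 ^ 2 + d * a0 * b0 + g * a0 + h * b0 + j) :
    (∃ z : ℝ, z ^ 4 + p2 * z ^ 2 + p0 = 0 ∧ z ^ 2 + q1 * z + q0 = 0)
      ↔ sylvRes p2 p0 q1 q0 = 0 ∧ p0 ≤ 0 ∧ q1 ^ 2 - 4 * q0 ≥ 0 := by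
  have hkey : sylvRes p2 p0 q1 q0 =
      (p0 - q0*(p2 - q0 + q1^2))^2
        - (p0 - q0*(p2 - q0 + q1^2)) * (-q1*(p2 - 2*q0 + q1^2)) * q1
        + (-q1*(p2 - 2*q0 + q1^2))^2 * q0 := sylvRes_eq p2 p0 q1 q0
  constructor
  · rintro ⟨z, hT, hQ⟩
    have hp2pos : 0 < p2 := by nlinarith [sq_nonneg a0, sq_nonneg b0, sq_nonneg (R - r)]
    refine ⟨?_, ?_, ?_⟩
    · rw [hkey]
      linear_combination (p0 - q0*(p2 - q0 + q1^2) + q1*(p2 - 2*q0 + q1^2) * z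
          + q1*(p2 - 2*q0 + q1^2) * q1) * hT
        + ((-q1*(p2 - 2*q0 + q1^2))^2 - (z^2 - q1*z + (p2 - q0 + q1^2)) *
          (p0 - q0*(p2 - q0 + q1^2) + q1*(p2 - 2*q0 + q1^2) * z
          + q1*(p2 - 2*q0 + q1^2) * q1)) * hQ
    · nlinarith [sq_nonneg z, sq_nonneg (z^2), hp2pos]
    · nlinarith [sq_nonneg (2*z + q1)]
  · rintro ⟨hRes, _, hΔ⟩
    rw [hkey] at hRes
    have hD2 : Real.sqrt (q1^2 - 4*q0) ^ 2 = q1^2 - 4*q0 := Real.sq_sqrt hΔ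
    set D := Real.sqrt (q1^2 - 4*q0) with hD
    set c1 : ℝ := -q1*(p2 - 2*q0 + q1^2) with hc1
    set c0 : ℝ := p0 - q0*(p2 - q0 + q1^2) with hc0
    have hprod : (c1 * ((-q1 + D)/2) + c0) * (c1 * ((-q1 - D)/2) + c0) = 0 := by
      rw [hc1, hc0]
      rw [hc1, hc0] at hRes
      linear_combination hRes - ((-q1*(p2 - 2*q0 + q1^2))^2/4) * hD2
    rcases mul_eq_zero.mp hprod with hL | hL
    · have hQ1 : ((-q1 + D)/2) ^ 2 + q1 * ((-q1 + D)/2) + q0 = 0 := by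
        linear_combination (1/4 : ℝ) * hD2
      refine ⟨(-q1 + D)/2, ?_, hQ1⟩
      rw [hc1, hc0] at hL
      linear_combination (((-q1 + D)/2)^2 - q1*((-q1 + D)/2) + (p2 - q0 + q1^2)) * hQ1 + hL
    · have hQ2 : ((-q1 - D)/2) ^ 2 + q1 * ((-q1 - D)/2) + q0 = 0 := by
        linear_combination (1/4 : ℝ) * hD2
      refine ⟨(-q1 - D)/2, ?_, hQ2⟩
      rw [hc1, hc0] at hL
      linear_combination (((-q1 - D)/2)^2 - q1*((-q1 - D)/2) + (p2 - q0 + q1^2)) * hQ2 + hL
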